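/- Let E, F, G be topological graphs, let m be a regular factor map from F to E, and let n be a regular factor map from G to F. Then the composition m ∘ n = (m^0 ∘ n^0, m^1 ∘ n^1) is a regular factor map from G to E. -/

import Mathlib

open Set Filter OnePoint

namespace TopGraphAux

/-- `E⁰_sce`: the open set of sources of a topological graph. -/
def graphSce {E0 E1 : Type*} [TopologicalSpace E0] (r : E1 → E0) : Set E0 :=
  (closure (Set.range r))ᶜ

/-- `E⁰_fin`: vertices having a neighborhood whose `r`-preimage is compact. -/
def graphFin {E0 E1 : Type*} [TopologicalSpace E0] [TopologicalSpace E1] (r : E1 → E0) :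
    Set E0 :=
  {v | ∃ V ∈ nhds v, IsCompact (r ⁻¹' V)}

/-- `E⁰_rg`: the open set of regular vertices of a topological graph. -/
def graphRg {E0 E1 : Type*} [TopologicalSpace E0] [TopologicalSpace E1] (r : E1 → E0) :
    Set E0 :=
  graphFin r \ closure (graphSce r)

/-- A factor map from the topological graph `F = (F0, F1, dF, rF)` to the topological graph
`E = (E0, E1, dE, rE)`: a pair of continuous maps between one-point compactifications sending
`∞` to `∞`, intertwining range and domain maps, and with the unique edge-lifting property. -/
structure IsFactorMap {E0 E1 F0 F1 : Type*}
    [TopologicalSpace E0] [TopologicalSpace E1] [TopologicalSpace F0] [TopologicalSpace F1]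
    (dE rE : E1 → E0) (dF rF : F1 → F0)
    (m0 : OnePoint F0 → OnePoint E0) (m1 : OnePoint F1 → OnePoint E1) : Prop where
  continuous_m0 : Continuous m0
  continuous_m1 : Continuous m1
  map_infty0 : m0 ∞ = ∞
  map_infty1 : m1 ∞ = ∞
  compat : ∀ (e : F1) (e' : E1), m1 ↑e = ↑e' →
    (↑(rE e') : OnePoint E0) = m0 ↑(rF e) ∧ (↑(dE e') : OnePoint E0) = m0 ↑(dF e)
  lift : ∀ (e' : E1) (v : F0), (↑(dE e') : OnePoint E0) = m0 ↑v →
    ∃! e : F1, m1 ↑e = (↑e' : OnePoint E1) ∧ dF e = v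

/-- Regularity of a factor map: every vertex mapping to a regular vertex receives an edge,
and all edges it receives are mapped to genuine edges. -/
def IsRegularFactorMap {E0 E1 F0 F1 : Type*}
    [TopologicalSpace E0] [TopologicalSpace E1] [TopologicalSpace F0] [TopologicalSpace F1]
    (rE : E1 → E0) (rF : F1 → F0)
    (m0 : OnePoint F0 → OnePoint E0) (m1 : OnePoint F1 → OnePoint E1) : Prop :=
  ∀ (v : F0) (w : E0), m0 ↑v = ↑w → w ∈ graphRg rE →
    (∃ e : F1, rF e = v) ∧ ∀ e : F1, rF e = v → ∃ e' : E1, m1 ↑e = ↑e'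

/-- `f` restricts to a homeomorphism from `U` onto `V`. -/
def IsHomeoOn {X Y : Type*} [TopologicalSpace X] [TopologicalSpace Y]
    (f : X → Y) (U : Set X) (V : Set Y) : Prop :=
  ∃ h : U ≃ₜ V, ∀ x : U, (h x : Y) = f (x : X)

/-- Extension of a map `A → OnePoint B` to the one-point compactification, sending `∞` to `∞`. -/
def onePointLift {A B : Type*} (f : A → OnePoint B) : OnePoint A → OnePoint B :=
  fun x => Option.elim x ∞ f

/-- The relation identifying the copy in `S` of each point of `B ⊆ S` with the corresponding
point of `X`. -/
def glueRel {X : Type*} (S B : Set X) : (X ⊕ ↥S) → (X ⊕ ↥S) → Prop :=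
  fun a b => ∃ x : ↥S, (x : X) ∈ B ∧
    ((a = Sum.inl ↑x ∧ b = Sum.inr x) ∨ (a = Sum.inr x ∧ b = Sum.inl ↑x))

/-- The space `X ⨿_B S` obtained from `X ⊔ S` by identifying the two copies of each point
of `B ⊆ S ⊆ X`. -/
def Glue (X : Type*) (S B : Set X) : Type _ := Quot (glueRel S B)

instance {X : Type*} [TopologicalSpace X] (S B : Set X) : TopologicalSpace (Glue X S B) :=
  inferInstanceAs (TopologicalSpace (Quot _))

/-- The canonical inclusion `X → X ⨿_B S`. -/
def Glue.inl {X : Type*} {S B : Set X} (x : X) : Glue X S B := Quot.mk _ (Sum.inl x)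

/-- The inclusion of the extra copy `S → X ⨿_B S`. -/
def Glue.inr {X : Type*} {S B : Set X} (x : ↥S) : Glue X S B := Quot.mk _ (Sum.inr x)

/-- The extension `d_Y` of the domain map `d` to the graph `E_Y`. -/
def glueD {E0 E1 : Type*} [TopologicalSpace E0] (d : E1 → E0) (Y : Set E0) :
    Glue E1 (d ⁻¹' closure Y) (d ⁻¹' (closure Y \ Y)) → Glue E0 (closure Y) (closure Y \ Y) :=
  Quot.lift
    (Sum.elim (fun e => Glue.inl (d e)) (fun e => Glue.inr ⟨d e.1, e.2⟩))
    (by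
      rintro a b ⟨x, hx, (⟨rfl, rfl⟩ | ⟨rfl, rfl⟩)⟩
      · exact Quot.sound ⟨⟨d x.1, x.2⟩, hx, Or.inl ⟨rfl, rfl⟩⟩
      · exact (Quot.sound ⟨⟨d x.1, x.2⟩, hx, Or.inl ⟨rfl, rfl⟩⟩).symm)

/-- The extension `r_Y` of the range map `r` to the graph `E_Y`. -/
def glueR {E0 E1 : Type*} [TopologicalSpace E0] (d r : E1 → E0) (Y : Set E0) :
    Glue E1 (d ⁻¹' closure Y) (d ⁻¹' (closure Y \ Y)) → Glue E0 (closure Y) (closure Y \ Y) :=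
  Quot.lift (Sum.elim (fun e => Glue.inl (r e)) (fun e => Glue.inl (r e.1)))
    (by rintro a b ⟨x, hx, (⟨rfl, rfl⟩ | ⟨rfl, rfl⟩)⟩ <;> rfl)

/-- The projection from the glued space back onto the original space. -/
def glueProj {X : Type*} (S B : Set X) : Glue X S B → X :=
  Quot.lift (Sum.elim id Subtype.val)
    (by rintro a b ⟨x, hx, (⟨rfl, rfl⟩ | ⟨rfl, rfl⟩)⟩ <;> rfl)

/-- A point of the projective limit `E^i = Ẽ^i \ {∞}`: a compatible thread of points of the
one-point compactifications, not all equal to `∞`. -/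
structure LimPt {Λ : Type*} [Preorder Λ] (X : Λ → Type*)
    (m : ∀ ⦃l l' : Λ⦄, l ≤ l' → OnePoint (X l') → OnePoint (X l)) where
  pt : ∀ l, OnePoint (X l)
  compat : ∀ ⦃l l' : Λ⦄ (h : l ≤ l'), m h (pt l') = pt l
  exists_ne_infty : ∃ l, pt l ≠ ∞

instance {Λ : Type*} [Preorder Λ] (X : Λ → Type*) [∀ l, TopologicalSpace (X l)]
    (m : ∀ ⦃l l' : Λ⦄, l ≤ l' → OnePoint (X l') → OnePoint (X l)) :
    TopologicalSpace (LimPt X m) :=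
  TopologicalSpace.induced LimPt.pt inferInstance

/-- Topological freeness: the set of base points of loops without entrances has empty
interior. -/
def IsTopologicallyFree {E0 E1 : Type*} [TopologicalSpace E0] (d r : E1 → E0) : Prop :=
  interior {v : E0 | ∃ (n : ℕ) (hn : 0 < n) (e : Fin n → E1),
      (∀ k : Fin n, d (e k) = r (e ⟨(k.1 + 1) % n, Nat.mod_lt _ hn⟩)) ∧
      (∀ (k : Fin n) (e' : E1), r e' = r (e k) → e' = e k) ∧
      r (e ⟨0, hn⟩) = v} = ∅

open scoped Classical in
/-- Partial iteration of a partially defined map `σ` with domain `W`: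
`sgdsIter σ n x = some y` iff `x ∈ dom (σ^n)` and `σ^n x = y`. -/
noncomputable def sgdsIter {X : Type*} {W : Set X} (σ : ↥W → X) : ℕ → X → Option X
  | 0, x => Option.some x
  | n + 1, x => if h : x ∈ W then sgdsIter σ n (σ ⟨x, h⟩) else none


lemma isOpen_graphFin {E0 E1 : Type*} [TopologicalSpace E0] [TopologicalSpace E1]
    (r : E1 → E0) : IsOpen (graphFin r) := by
  rw [isOpen_iff_mem_nhds]
  rintro v ⟨V, hV, hK⟩
  filter_upwards [interior_mem_nhds.2 hV] with x hx
  exact ⟨V, mem_interior_iff_mem_nhds.1 hx, hK⟩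

lemma isOpen_graphRg {E0 E1 : Type*} [TopologicalSpace E0] [TopologicalSpace E1]
    (r : E1 → E0) : IsOpen (graphRg r) :=
  (isOpen_graphFin r).sdiff isClosed_closure

/-- A point of a one-point compactification is either `∞` or a genuine point. -/
lemma onePoint_cases {X : Type*} (x : OnePoint X) : x = ∞ ∨ ∃ a : X, x = ↑a := by
  induction x using OnePoint.rec
  · exact Or.inl rfl
  · exact Or.inr ⟨_, rfl⟩

/-- Key lemma: a regular factor map pulls back regular vertices to regular vertices. -/
lemma mem_graphRg_of_regularFactorMap {E0 E1 F0 F1 : Type*}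
    [TopologicalSpace E0] [TopologicalSpace E1] [T2Space E0] [T2Space E1]
    [LocallyCompactSpace E0] [LocallyCompactSpace E1]
    [TopologicalSpace F0] [TopologicalSpace F1] [T2Space F0] [T2Space F1]
    [LocallyCompactSpace F0] [LocallyCompactSpace F1]
    {dE rE : E1 → E0} (hrE : Continuous rE)
    {dF rF : F1 → F0} (hrF : Continuous rF)
    {m0 : OnePoint F0 → OnePoint E0} {m1 : OnePoint F1 → OnePoint E1}
    (hm : IsFactorMap dE rE dF rF m0 m1)
    (hmreg : IsRegularFactorMap rE rF m0 m1)
    {u : F0} {w : E0} (huw : m0 ↑u = ↑w) (hw : w ∈ graphRg rE) :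
    u ∈ graphRg rF := by
  obtain ⟨⟨W₀, hW₀, hW₀c⟩, -⟩ := id hw
  -- Choose a compact neighborhood of `w` inside `interior W₀ ∩ graphRg rE`.
  have hOopen : IsOpen (interior W₀ ∩ graphRg rE) :=
    isOpen_interior.inter (isOpen_graphRg rE)
  have hwO : w ∈ interior W₀ ∩ graphRg rE :=
    ⟨mem_interior_iff_mem_nhds.2 hW₀, hw⟩
  obtain ⟨K, hKc, hwK, hKO⟩ := exists_compact_subset hOopen hwO
  set V : Set E0 := interior K with hV
  have hVcl_sub : closure V ⊆ K := closure_minimal interior_subset hKc.isClosed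
  have hVcl_c : IsCompact (closure V) := hKc.of_isClosed_subset isClosed_closure hVcl_sub
  have hVcl_rg : closure V ⊆ graphRg rE := fun x hx => (hKO (hVcl_sub hx)).2
  -- `KE = rE ⁻¹' closure V` is compact.
  have hKEc : IsCompact (rE ⁻¹' closure V) := by
    refine hW₀c.of_isClosed_subset (isClosed_closure.preimage hrE) ?_
    exact fun e he => Set.mem_preimage.2 (interior_subset (hKO (hVcl_sub he)).1)
  -- `S = m1 ⁻¹' ((↑) '' KE)` is a compact subset of `OnePoint F1` avoiding `∞`.
  set S : Set (OnePoint F1) := m1 ⁻¹' ((↑) '' (rE ⁻¹' closure V)) with hS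
  have hScl : IsClosed S :=
    ((hKEc.image OnePoint.continuous_coe).isClosed).preimage hm.continuous_m1
  have hSc : IsCompact S := hScl.isCompact
  have hSne : (∞ : OnePoint F1) ∉ S := by
    intro h
    rw [hS, mem_preimage, hm.map_infty1] at h
    obtain ⟨e, -, he⟩ := h
    exact OnePoint.infty_ne_coe e he.symm
  -- its preimage in `F1` is compact
  have hTc : IsCompact ((fun f : F1 => m1 ↑f) ⁻¹' ((↑) '' (rE ⁻¹' closure V))) := by
    rw [OnePoint.isOpenEmbedding_coe.isEmbedding.isCompact_iff]
    have : ((↑) : F1 → OnePoint F1) '' ((↑) ⁻¹' S) = S := by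
      apply Set.image_preimage_eq_of_subset
      intro x hx
      rcases onePoint_cases x with rfl | ⟨a, rfl⟩
      · exact absurd hx hSne
      · exact Set.mem_range_self a
    exact this ▸ hSc
  -- the set `Z` is a closed subset of the above compact set
  set U : Set F0 := (fun x : F0 => m0 ↑x) ⁻¹' ((↑) '' closure V) with hU
  have hZcl : IsClosed (rF ⁻¹' U) := by
    show IsClosed ((fun f : F1 => m0 ↑(rF f)) ⁻¹' ((↑) '' closure V))
    exact IsClosed.preimage (hm.continuous_m0.comp (OnePoint.continuous_coe.comp hrF))
      ((hVcl_c.image OnePoint.continuous_coe).isClosed)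
  have hZT : rF ⁻¹' U ⊆ (fun f : F1 => m1 ↑f) ⁻¹' ((↑) '' (rE ⁻¹' closure V)) := by
    rintro f hf
    obtain ⟨w', hw', hw'eq⟩ := hf
    have hreg := hmreg (rF f) w' hw'eq.symm (hVcl_rg hw')
    obtain ⟨e', he'⟩ := hreg.2 f rfl
    obtain ⟨hre, -⟩ := hm.compat f e' he'
    have : rE e' = w' := by
      apply OnePoint.coe_injective
      rw [hre]; exact hw'eq.symm
    exact ⟨e', by rw [Set.mem_preimage, this]; exact hw', he'.symm⟩
  have hZc : IsCompact (rF ⁻¹' U) := hTc.of_isClosed_subset hZcl hZT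
  constructor
  · -- `u ∈ graphFin rF`
    refine ⟨U, ?_, hZc⟩
    have hopen : IsOpen ((fun x : F0 => m0 ↑x) ⁻¹' ((↑) '' V)) :=
      (OnePoint.isOpenMap_coe _ isOpen_interior).preimage
        (hm.continuous_m0.comp OnePoint.continuous_coe)
    have hsub : (fun x : F0 => m0 ↑x) ⁻¹' ((↑) '' V) ⊆ U :=
      Set.preimage_mono (Set.image_mono subset_closure)
    have humem : u ∈ (fun x : F0 => m0 ↑x) ⁻¹' ((↑) '' V) := by
      rw [Set.mem_preimage, huw]
      exact ⟨w, hwK, rfl⟩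
    exact Filter.mem_of_superset (hopen.mem_nhds humem) hsub
  · -- `u ∉ closure (graphSce rF)`
    intro hu
    have hCcl : IsClosed ((fun x : F0 => m0 ↑x) ⁻¹' ((↑) '' graphRg rE)ᶜ) := by
      refine IsClosed.preimage (hm.continuous_m0.comp OnePoint.continuous_coe) ?_
      exact (OnePoint.isOpenMap_coe _ (isOpen_graphRg rE)).isClosed_compl
    have hsub : graphSce rF ⊆ (fun x : F0 => m0 ↑x) ⁻¹' ((↑) '' graphRg rE)ᶜ := by
      intro x hx
      rintro ⟨w', hw', hw'eq⟩
      obtain ⟨⟨e, he⟩, -⟩ := hmreg x w' hw'eq.symm hw'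
      exact hx (subset_closure ⟨e, he⟩)
    have := closure_minimal hsub hCcl hu
    exact this ⟨w, hw, huw.symm⟩

/-- The composition of two regular factor maps is a regular factor map. -/
theorem statement3
    {E0 E1 F0 F1 G0 G1 : Type*}
    [TopologicalSpace E0] [TopologicalSpace E1] [T2Space E0] [T2Space E1]
    [LocallyCompactSpace E0] [LocallyCompactSpace E1]
    [TopologicalSpace F0] [TopologicalSpace F1] [T2Space F0] [T2Space F1]
    [LocallyCompactSpace F0] [LocallyCompactSpace F1]
    [TopologicalSpace G0] [TopologicalSpace G1] [T2Space G0] [T2Space G1]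
    [LocallyCompactSpace G0] [LocallyCompactSpace G1]
    (dE rE : E1 → E0) (hdE : IsLocalHomeomorph dE) (hrE : Continuous rE)
    (dF rF : F1 → F0) (hdF : IsLocalHomeomorph dF) (hrF : Continuous rF)
    (dG rG : G1 → G0) (hdG : IsLocalHomeomorph dG) (hrG : Continuous rG)
    (m0 : OnePoint F0 → OnePoint E0) (m1 : OnePoint F1 → OnePoint E1)
    (n0 : OnePoint G0 → OnePoint F0) (n1 : OnePoint G1 → OnePoint F1)
    (hm : IsFactorMap dE rE dF rF m0 m1)
    (hn : IsFactorMap dF rF dG rG n0 n1)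
    (hmreg : IsRegularFactorMap rE rF m0 m1)
    (hnreg : IsRegularFactorMap rF rG n0 n1) :
    IsFactorMap dE rE dG rG (m0 ∘ n0) (m1 ∘ n1) ∧
      IsRegularFactorMap rE rG (m0 ∘ n0) (m1 ∘ n1) := by
  constructor
  · refine ⟨hm.continuous_m0.comp hn.continuous_m0, hm.continuous_m1.comp hn.continuous_m1,
      ?_, ?_, ?_, ?_⟩
    · show m0 (n0 ∞) = ∞; rw [hn.map_infty0, hm.map_infty0]
    · show m1 (n1 ∞) = ∞; rw [hn.map_infty1, hm.map_infty1]
    · -- compat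
      intro g e' hge'
      rcases onePoint_cases (n1 ↑g) with h | ⟨f, hf⟩
      · exfalso
        have : m1 (n1 ↑g) = ∞ := by rw [h, hm.map_infty1]
        rw [show (m1 ∘ n1) ↑g = m1 (n1 ↑g) from rfl, this] at hge'
        exact OnePoint.infty_ne_coe e' hge'
      · have hm1 : m1 ↑f = ↑e' := by rw [← hf]; exact hge'
        obtain ⟨hr1, hd1⟩ := hm.compat f e' hm1
        obtain ⟨hr2, hd2⟩ := hn.compat g f hf
        constructor
        · show (↑(rE e') : OnePoint E0) = m0 (n0 ↑(rG g))
          rw [← hr2, ← hr1]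
        · show (↑(dE e') : OnePoint E0) = m0 (n0 ↑(dG g))
          rw [← hd2, ← hd1]
    · -- lift
      intro e' v hdv
      rcases onePoint_cases (n0 ↑v) with h | ⟨u, hu⟩
      · exfalso
        have : m0 (n0 ↑v) = ∞ := by rw [h, hm.map_infty0]
        rw [show (m0 ∘ n0) ↑v = m0 (n0 ↑v) from rfl, this] at hdv
        exact OnePoint.infty_ne_coe (dE e') hdv.symm
      · have hdu : (↑(dE e') : OnePoint E0) = m0 ↑u := by rw [← hu]; exact hdv
        obtain ⟨f, ⟨hf1, hf2⟩, hfuniq⟩ := hm.lift e' u hdu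
        have hdfv : (↑(dF f) : OnePoint F0) = n0 ↑v := by rw [hf2, hu]
        obtain ⟨g, ⟨hg1, hg2⟩, hguniq⟩ := hn.lift f v hdfv
        refine ⟨g, ⟨?_, hg2⟩, ?_⟩
        · show m1 (n1 ↑g) = ↑e'; rw [hg1, hf1]
        · rintro g' ⟨hg'1, hg'2⟩
          rcases onePoint_cases (n1 ↑g') with h | ⟨f', hf'⟩
          · exfalso
            have : m1 (n1 ↑g') = ∞ := by rw [h, hm.map_infty1]
            rw [show (m1 ∘ n1) ↑g' = m1 (n1 ↑g') from rfl, this] at hg'1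
            exact OnePoint.infty_ne_coe e' hg'1
          · have hm1' : m1 ↑f' = ↑e' := by rw [← hf']; exact hg'1
            obtain ⟨-, hd'⟩ := hn.compat g' f' hf'
            have hff : f' = f := by
              apply hfuniq
              refine ⟨hm1', ?_⟩
              apply OnePoint.coe_injective
              rw [hd', hg'2, hu]
            exact hguniq g' ⟨by rw [hf', hff], hg'2⟩
  · -- regularity
    intro v w hvw hw
    rcases onePoint_cases (n0 ↑v) with h | ⟨u, hu⟩
    · exfalso
      have : m0 (n0 ↑v) = ∞ := by rw [h, hm.map_infty0]
      rw [show (m0 ∘ n0) ↑v = m0 (n0 ↑v) from rfl, this] at hvw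
      exact OnePoint.infty_ne_coe w hvw
    · have hmu : m0 ↑u = ↑w := by rw [← hu]; exact hvw
      have hureg : u ∈ graphRg rF :=
        mem_graphRg_of_regularFactorMap hrE hrF hm hmreg hmu hw
      obtain ⟨hex, hall⟩ := hnreg v u hu hureg
      refine ⟨hex, ?_⟩
      intro g hg
      obtain ⟨f, hf⟩ := hall g hg
      have hrf : rF f = u := by
        obtain ⟨hr, -⟩ := hn.compat g f hf
        apply OnePoint.coe_injective
        rw [hr, hg]; exact hu
      obtain ⟨-, hall'⟩ := hmreg u w hmu hw
      obtain ⟨e', he'⟩ := hall' f hrf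
      exact ⟨e', by show m1 (n1 ↑g) = ↑e'; rw [hf, he']⟩

end TopGraphAux
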